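/- For every r ≥ 1 and n ∈ ℕ, the order-r q-Bernoulli polynomial expands in the order-r q-Frobenius–Euler basis as B^{(r)}_{n,q}(x) = (1/(1 − λ)^r) · ∑_{k=0}^{n} A_k · H^{(r)}_{k,q}(x|λ), where A_k = ∑_{m=0}^{n−k} ∑_{l=0}^{r} ∑_{(i_1,…,i_l) ∈ ℕ^l, i_1+⋯+i_l = m} binom(r,l) · (−λ)^{r−l} · C(m; i_1,…,i_l)_q · C(m+k,m)_q · C(n,m+k)_q · B^{(r)}_{n−m−k,q}; here binom(r,l) is the ordinary binomial coefficient and C(m; i_1,…,i_l)_q = [m]_q!/([i_1]_q! ⋯ [i_l]_q!) is the q-multinomial coefficient (with the sum over the empty tuple for l = 0 equal to δ_{m,0}). -/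

import Mathlib

open Finset Polynomial

/-- The `q`-integer `[n]_q = (1 - q^n)/(1 - q)` viewed in `ℂ`. -/
noncomputable def qInt (q : ℝ) (n : ℕ) : ℂ := (1 - (q : ℂ) ^ n) / (1 - (q : ℂ))

/-- The `q`-factorial `[n]_q! = ∏_{j=1}^n [j]_q`. -/
noncomputable def qFact (q : ℝ) (n : ℕ) : ℂ := ∏ j ∈ Finset.range n, qInt q (j + 1)

/-- The `q`-binomial coefficient `[n]_q!/([k]_q! [n-k]_q!)`. -/
noncomputable def qBinom (q : ℝ) (n k : ℕ) : ℂ := qFact q n / (qFact q k * qFact q (n - k))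

/-- The formal `q`-exponential `e_q(t) = ∑ t^n/[n]_q!` in `ℂ[x][[t]]`. -/
noncomputable def qExp (q : ℝ) : PowerSeries (Polynomial ℂ) :=
  PowerSeries.mk fun n => Polynomial.C (1 / qFact q n)

/-- The formal series `e_q(xt) = ∑ x^n t^n/[n]_q!` in `ℂ[x][[t]]`. -/
noncomputable def qExpX (q : ℝ) : PowerSeries (Polynomial ℂ) :=
  PowerSeries.mk fun n => Polynomial.C (1 / qFact q n) * Polynomial.X ^ n

/-- `H : ℕ → ℂ[x]` is the family of order-`r` `q`-Frobenius-Euler polynomials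
`H^{(r)}_{n,q}(x|λ)`:
`(∑ H_n t^n/[n]_q!) ⬝ (e_q(t) - λ)^r = (1 - λ)^r e_q(xt)` in `ℂ[x][[t]]`. -/
def IsqFrobeniusEulerOrder (q : ℝ) (lam : ℂ) (r : ℕ) (H : ℕ → Polynomial ℂ) : Prop :=
  (PowerSeries.mk fun n => Polynomial.C (1 / qFact q n) * H n) *
      (qExp q - PowerSeries.C (Polynomial.C lam)) ^ r =
    PowerSeries.C (Polynomial.C ((1 - lam) ^ r)) * qExpX q

/-- `B : ℕ → ℂ[x]` is the family of order-`r` `q`-Bernoulli polynomials `B^{(r)}_{n,q}(x)`: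
`(∑ B_n t^n/[n]_q!) ⬝ (e_q(t) - 1)^r = t^r e_q(xt)` in `ℂ[x][[t]]`. -/
def IsqBernoulliOrder (q : ℝ) (r : ℕ) (B : ℕ → Polynomial ℂ) : Prop :=
  (PowerSeries.mk fun n => Polynomial.C (1 / qFact q n) * B n) * (qExp q - 1) ^ r =
    PowerSeries.X ^ r * qExpX q

section Helpers

lemma sum_antidiagonalTuple_succ {M : Type*} [CommSemiring M] (g : ℕ → M) (l m : ℕ) :
    ∑ i ∈ Finset.Nat.antidiagonalTuple (l + 1) m, ∏ j, g (i j) =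
      ∑ ab ∈ Finset.HasAntidiagonal.antidiagonal m, g ab.1 *
        ∑ i ∈ Finset.Nat.antidiagonalTuple l ab.2, ∏ j, g (i j) := by
  have h2 : ∑ x ∈ (Finset.HasAntidiagonal.antidiagonal m).sigma (fun ab => Finset.Nat.antidiagonalTuple l ab.2),
      (g x.1.1 * ∏ j, g (x.2 j)) =
      ∑ ab ∈ Finset.HasAntidiagonal.antidiagonal m, ∑ i ∈ Finset.Nat.antidiagonalTuple l ab.2,
        (g ab.1 * ∏ j, g (i j)) := Finset.sum_sigma _ _ _
  simp_rw [Finset.mul_sum]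
  rw [← h2]
  refine Finset.sum_nbij' (fun y => ⟨(y 0, ∑ j, y (Fin.succ j)), Fin.tail y⟩)
    (fun x => Fin.cons x.1.1 x.2) ?_ ?_ ?_ ?_ ?_
  · intro y hy
    rw [Finset.Nat.mem_antidiagonalTuple] at hy
    simp only [Finset.mem_sigma, Finset.HasAntidiagonal.mem_antidiagonal, Finset.Nat.mem_antidiagonalTuple]
    constructor
    · rw [← hy, Fin.sum_univ_succ]
    · rfl
  · intro x hx
    rw [Finset.mem_sigma, Finset.HasAntidiagonal.mem_antidiagonal, Finset.Nat.mem_antidiagonalTuple] at hx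
    rw [Finset.Nat.mem_antidiagonalTuple, Fin.sum_cons, hx.2, hx.1]
  · intro y hy
    exact Fin.cons_self_tail y
  · intro x hx
    rw [Finset.mem_sigma, Finset.HasAntidiagonal.mem_antidiagonal, Finset.Nat.mem_antidiagonalTuple] at hx
    refine Sigma.ext ?_ (heq_of_eq ?_)
    · simp only [Fin.cons_zero, Fin.cons_succ]
      ext <;> simp [hx.2]
    · simp [Fin.tail, Fin.cons_succ]
  · intro y hy
    rw [Fin.prod_univ_succ]
    rfl

lemma coeff_pow_tuple {R : Type*} [CommSemiring R] (φ : PowerSeries R) (l m : ℕ) :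
    PowerSeries.coeff m (φ ^ l) =
      ∑ i ∈ Finset.Nat.antidiagonalTuple l m, ∏ j, PowerSeries.coeff (i j) φ := by
  induction l generalizing m with
  | zero =>
    cases m with
    | zero => simp [Finset.Nat.antidiagonalTuple_zero_zero]
    | succ m => simp [Finset.Nat.antidiagonalTuple_zero_succ]
  | succ l ih =>
    rw [pow_succ, mul_comm, PowerSeries.coeff_mul,
      sum_antidiagonalTuple_succ (fun t => PowerSeries.coeff t φ)]
    exact Finset.sum_congr rfl fun ab _ => by rw [ih]

lemma qInt_ne_zero {q : ℝ} (hq0 : 0 < q) (hq1 : q < 1) (n : ℕ) : qInt q (n + 1) ≠ 0 := by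
  unfold qInt
  have hq : (q : ℂ) ^ (n + 1) ≠ 1 := by
    have : q ^ (n + 1) < 1 := pow_lt_one₀ (le_of_lt hq0) hq1 (Nat.succ_ne_zero n)
    intro h
    rw [← Complex.ofReal_pow, show (1:ℂ) = ((1:ℝ):ℂ) by norm_num] at h
    have := Complex.ofReal_injective h
    linarith
  have hq' : (1 : ℂ) - (q : ℂ) ≠ 0 := by
    intro h
    have : (q : ℂ) = 1 := by linear_combination -h
    have := Complex.ofReal_injective (by simpa using this)
    linarith
  exact div_ne_zero (fun h => hq (by linear_combination -h)) hq'

lemma qFact_ne_zero {q : ℝ} (hq0 : 0 < q) (hq1 : q < 1) (n : ℕ) : qFact q n ≠ 0 :=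
  Finset.prod_ne_zero_iff.2 fun j _ => qInt_ne_zero hq0 hq1 j

lemma qFact_zero (q : ℝ) : qFact q 0 = 1 := by simp [qFact]

lemma qFact_one {q : ℝ} (hq1 : q < 1) : qFact q 1 = 1 := by
  have hq' : (1 : ℂ) - (q : ℂ) ≠ 0 := by
    intro h
    have : (q : ℂ) = 1 := by linear_combination -h
    have := Complex.ofReal_injective (by simpa using this)
    linarith
  simp [qFact, qInt, div_self hq']

lemma qExp_sub_one_ne_zero {q : ℝ} (hq1 : q < 1) : qExp q - 1 ≠ 0 := by
  intro h
  have := congrArg (PowerSeries.coeff 1) h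
  rw [map_sub] at this
  simp [qExp, qFact_one hq1, PowerSeries.coeff_one] at this

/-- The scalar `∑_l ∑_i C(r,l)(-λ)^{r-l} ∏ 1/[i_j]!`, i.e. the `m`-th coefficient of
`(e_q(t) - λ)^r` (up to `C`). -/
noncomputable def gq (q : ℝ) (lam : ℂ) (r m : ℕ) : ℂ :=
  ∑ l ∈ Finset.range (r + 1), ∑ i ∈ Finset.Nat.antidiagonalTuple l m,
    (r.choose l : ℂ) * (-lam) ^ (r - l) * ∏ j, (1 / qFact q (i j))

lemma coeff_E (q : ℝ) (lam : ℂ) (r m : ℕ) :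
    PowerSeries.coeff m
        ((qExp q - PowerSeries.C (Polynomial.C lam)) ^ r) =
      Polynomial.C (gq q lam r m) := by
  have hsub : qExp q - PowerSeries.C (Polynomial.C lam)
      = qExp q + PowerSeries.C (Polynomial.C (-lam)) := by
    rw [map_neg, map_neg, ← sub_eq_add_neg]
  rw [hsub, add_pow, map_sum]
  have hterm : ∀ l, (qExp q) ^ l * (PowerSeries.C (Polynomial.C (-lam))) ^ (r - l)
      * ((r.choose l : ℕ) : PowerSeries (Polynomial ℂ))
      = PowerSeries.C (Polynomial.C ((r.choose l : ℂ) * (-lam) ^ (r - l)))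
        * (qExp q) ^ l := by
    intro l
    rw [show ((r.choose l : ℕ) : PowerSeries (Polynomial ℂ))
        = PowerSeries.C (Polynomial.C ((r.choose l : ℕ) : ℂ)) by
      rw [map_natCast, map_natCast]]
    rw [← map_pow, ← map_pow, mul_assoc, ← map_mul, ← map_mul,
      mul_comm ((-lam) ^ (r - l)) ((r.choose l : ℕ) : ℂ)]
    ring
  rw [Finset.sum_congr rfl fun l _ => congrArg _ (hterm l)]
  simp only [PowerSeries.coeff_C_mul]
  have hqp : ∀ l m', PowerSeries.coeff m' ((qExp q) ^ l)
      = Polynomial.C (∑ i ∈ Finset.Nat.antidiagonalTuple l m', ∏ j, (1 / qFact q (i j))) := by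
    intro l m'
    rw [coeff_pow_tuple (qExp q) l m', map_sum]
    refine Finset.sum_congr rfl fun i _ => ?_
    rw [map_prod]
    exact Finset.prod_congr rfl fun j _ => by simp [qExp]
  simp only [hqp]
  simp only [← map_mul, ← map_sum, gq]
  exact congrArg _ (Finset.sum_congr rfl fun l _ => Finset.mul_sum _ _ _)

end Helpers

/-- For `r ≥ 1`,
`B^{(r)}_{n,q}(x) = (1/(1-λ)^r) ∑_{k=0}^n A_k H^{(r)}_{k,q}(x|λ)` with
`A_k = ∑_{m=0}^{n-k} ∑_{l=0}^r ∑_{i₁+⋯+i_l=m} binom(r,l) (-λ)^{r-l}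
  C(m;i₁,…,i_l)_q C(m+k,m)_q C(n,m+k)_q B^{(r)}_{n-m-k,q}`. -/
theorem qBernoulliOrder_expansion_in_qFrobeniusEulerOrder_basis
    (q : ℝ) (hq0 : 0 < q) (hq1 : q < 1) (lam : ℂ) (hlam : lam ≠ 1)
    (r : ℕ) (hr : 1 ≤ r)
    (B : ℕ → Polynomial ℂ) (hB : IsqBernoulliOrder q r B)
    (Hr : ℕ → Polynomial ℂ) (hHr : IsqFrobeniusEulerOrder q lam r Hr) (n : ℕ) :
    B n = Polynomial.C (1 / (1 - lam) ^ r) *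
      ∑ k ∈ Finset.range (n + 1),
        Polynomial.C (∑ m ∈ Finset.range (n - k + 1), ∑ l ∈ Finset.range (r + 1),
          ∑ i ∈ Finset.Nat.antidiagonalTuple l m,
            (r.choose l : ℂ) * (-lam) ^ (r - l) *
              (qFact q m / ∏ j, qFact q (i j)) *
              qBinom q (m + k) m * qBinom q n (m + k) *
              (B (n - m - k)).eval 0) * Hr k := by
  classical
  unfold IsqBernoulliOrder at hB
  unfold IsqFrobeniusEulerOrder at hHr
  have hf0 : ∀ m, qFact q m ≠ 0 := qFact_ne_zero hq0 hq1
  have hA : ((1 : ℂ) - lam) ^ r ≠ 0 := pow_ne_zero _ (sub_ne_zero.2 (Ne.symm hlam))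
  set ev : Polynomial ℂ →+* Polynomial ℂ :=
    Polynomial.C.comp (Polynomial.evalRingHom (0 : ℂ)) with hev
  set b : PowerSeries (Polynomial ℂ) :=
    PowerSeries.mk (fun u => Polynomial.C (1 / qFact q u * (B u).eval 0)) with hbdef
  -- the `q`-Bernoulli number generating series
  have hb : b * (qExp q - 1) ^ r = PowerSeries.X ^ r := by
    have h := congrArg (PowerSeries.map ev) hB
    rw [map_mul, map_pow, map_sub, map_one, map_mul, map_pow, PowerSeries.map_X] at h
    have h1 : PowerSeries.map ev
        (PowerSeries.mk fun n => Polynomial.C (1 / qFact q n) * B n) = b := by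
      ext u
      simp [PowerSeries.coeff_map, hbdef, hev]
    have h2 : PowerSeries.map ev (qExp q) = qExp q := by
      ext u
      simp [PowerSeries.coeff_map, qExp, hev]
    have h3 : PowerSeries.map ev (qExpX q) = 1 := by
      ext u
      cases u with
      | zero => simp [PowerSeries.coeff_map, qExpX, hev, qFact_zero]
      | succ u => simp [PowerSeries.coeff_map, qExpX, hev, PowerSeries.coeff_one]
    rw [h1, h2, h3, mul_one] at h
    exact h
  -- the key power-series identity
  set Hs : PowerSeries (Polynomial ℂ) :=
    PowerSeries.mk fun n => Polynomial.C (1 / qFact q n) * Hr n with hHs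
  set Bs : PowerSeries (Polynomial ℂ) :=
    PowerSeries.mk fun n => Polynomial.C (1 / qFact q n) * B n with hBs
  set E : PowerSeries (Polynomial ℂ) :=
    (qExp q - PowerSeries.C (Polynomial.C lam)) ^ r with hEdef
  have hkey : PowerSeries.C (Polynomial.C ((1 - lam) ^ r)) * Bs
      = Hs * (E * b) := by
    apply mul_right_cancel₀ (pow_ne_zero r (qExp_sub_one_ne_zero hq1))
    calc PowerSeries.C (Polynomial.C ((1 - lam) ^ r)) * Bs * (qExp q - 1) ^ r
        = PowerSeries.C (Polynomial.C ((1 - lam) ^ r))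
            * (Bs * (qExp q - 1) ^ r) := by ring
      _ = PowerSeries.X ^ r
            * (PowerSeries.C (Polynomial.C ((1 - lam) ^ r)) * qExpX q) := by
          rw [hB]; ring
      _ = PowerSeries.X ^ r * (Hs * E) := by rw [← hHr]
      _ = Hs * E * (b * (qExp q - 1) ^ r) := by rw [hb]; ring
      _ = Hs * (E * b) * (qExp q - 1) ^ r := by ring
  -- coefficient extraction
  have hEb : ∀ s, PowerSeries.coeff s (E * b)
      = Polynomial.C (∑ m ∈ Finset.range (s + 1),
          gq q lam r m * (1 / qFact q (s - m) * (B (s - m)).eval 0)) := by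
    intro s
    rw [PowerSeries.coeff_mul, Finset.Nat.sum_antidiagonal_eq_sum_range_succ_mk, map_sum]
    refine Finset.sum_congr rfl fun m _ => ?_
    rw [hEdef, coeff_E, hbdef, PowerSeries.coeff_mk, ← map_mul]
  have hcoeff := congrArg (PowerSeries.coeff n) hkey
  rw [PowerSeries.coeff_C_mul, PowerSeries.coeff_mul,
    Finset.Nat.sum_antidiagonal_eq_sum_range_succ_mk] at hcoeff
  simp only [hHs, hBs, PowerSeries.coeff_mk, hEb] at hcoeff
  -- rewrite `B n` using the extracted identity
  have hBn : B n = Polynomial.C (qFact q n / (1 - lam) ^ r) *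
      ∑ k ∈ Finset.range (n + 1), (Polynomial.C (1 / qFact q k) * Hr k) *
        Polynomial.C (∑ m ∈ Finset.range (n - k + 1),
          gq q lam r m * (1 / qFact q (n - k - m) * (B (n - k - m)).eval 0)) := by
    calc B n = Polynomial.C (qFact q n / (1 - lam) ^ r) *
        (Polynomial.C ((1 - lam) ^ r) * (Polynomial.C (1 / qFact q n) * B n)) := by
          rw [← mul_assoc, ← mul_assoc, ← map_mul, ← map_mul,
            show qFact q n / (1 - lam) ^ r * (1 - lam) ^ r * (1 / qFact q n) = 1 by
              field_simp [hf0 n, hA]]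
          rw [map_one, one_mul]
      _ = _ := by rw [hcoeff]
  rw [hBn, Finset.mul_sum, Finset.mul_sum]
  refine Finset.sum_congr rfl fun k hk => ?_
  rw [Finset.mem_range] at hk
  have hk' : k ≤ n := Nat.lt_succ_iff.mp hk
  -- per-`k` scalar identity
  have hscal : qFact q n / (1 - lam) ^ r *
        (1 / qFact q k * ∑ m ∈ Finset.range (n - k + 1),
          gq q lam r m * (1 / qFact q (n - k - m) * (B (n - k - m)).eval 0))
      = 1 / (1 - lam) ^ r * (∑ m ∈ Finset.range (n - k + 1), ∑ l ∈ Finset.range (r + 1),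
          ∑ i ∈ Finset.Nat.antidiagonalTuple l m,
            (r.choose l : ℂ) * (-lam) ^ (r - l) *
              (qFact q m / ∏ j, qFact q (i j)) *
              qBinom q (m + k) m * qBinom q n (m + k) *
              (B (n - m - k)).eval 0) := by
    rw [Finset.mul_sum, Finset.mul_sum, Finset.mul_sum]
    refine Finset.sum_congr rfl fun m hm => ?_
    rw [Finset.mem_range] at hm
    have hm' : m ≤ n - k := Nat.lt_succ_iff.mp hm
    simp only [gq, Finset.sum_mul, Finset.mul_sum]
    refine Finset.sum_congr rfl fun l _ => ?_
    refine Finset.sum_congr rfl fun i _ => ?_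
    have hP : (∏ j, qFact q (i j)) ≠ 0 := Finset.prod_ne_zero_iff.2 (fun j _ => hf0 _)
    have hprod : (∏ j, (1 / qFact q (i j))) = 1 / ∏ j, qFact q (i j) := by
      rw [one_div, ← Finset.prod_inv_distrib]
      exact Finset.prod_congr rfl fun j _ => (one_div _)
    have e1 : m + k - m = k := by omega
    have e2 : n - (m + k) = n - k - m := by omega
    have e3 : n - m - k = n - k - m := by omega
    rw [hprod, e3]
    have hcomb : qFact q m / (∏ j, qFact q (i j)) * qBinom q (m + k) m * qBinom q n (m + k)
        = qFact q n * (1 / qFact q k) * (1 / ∏ j, qFact q (i j))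
          * (1 / qFact q (n - k - m)) := by
      simp only [qBinom, e1, e2]
      have c1 : qFact q m * (qFact q m)⁻¹ = 1 := mul_inv_cancel₀ (hf0 m)
      have c2 : qFact q (m + k) * (qFact q (m + k))⁻¹ = 1 := mul_inv_cancel₀ (hf0 (m + k))
      simp only [div_eq_mul_inv, one_div, mul_inv]
      linear_combination (qFact q n * (∏ j, qFact q (i j))⁻¹ * (qFact q k)⁻¹
          * (qFact q (n - k - m))⁻¹ * (qFact q (m + k) * (qFact q (m + k))⁻¹)) * c1
        + (qFact q n * (∏ j, qFact q (i j))⁻¹ * (qFact q k)⁻¹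
          * (qFact q (n - k - m))⁻¹) * c2
    linear_combination (-(1 / ((1 - lam) ^ r) * ((r.choose l : ℂ) * (-lam) ^ (r - l))
      * (B (n - k - m)).eval 0)) * hcomb
  calc Polynomial.C (qFact q n / (1 - lam) ^ r) *
        ((Polynomial.C (1 / qFact q k) * Hr k) * Polynomial.C (∑ m ∈ Finset.range (n - k + 1),
          gq q lam r m * (1 / qFact q (n - k - m) * (B (n - k - m)).eval 0)))
      = Polynomial.C (qFact q n / (1 - lam) ^ r *
          (1 / qFact q k * ∑ m ∈ Finset.range (n - k + 1),
            gq q lam r m * (1 / qFact q (n - k - m) * (B (n - k - m)).eval 0))) * Hr k := by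
        rw [map_mul, map_mul]; ring
    _ = _ := by rw [hscal, map_mul]; ring
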